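/- arXiv:0912.2038 — 2 statements merged into one kernel-verified Lean document; each statement's English description precedes it below -/
import Mathlib

section
/- Let K, γ, m be positive integers and for 0 ≤ X ≤ γ let N(X) be the number of elements of the multiset {1,…,X} ∪ {K, K+1, …, K+γ−X−1} divisible by m. If β is chosen with 0 ≤ β ≤ γ such that β ≡ γ + K (mod m), then N(β) ≤ N(X) for all 0 ≤ X ≤ γ. -/
private lemma key_div (m S b X : ℕ) (hm : 0 < m) (hb : b ≤ S) (hX : X ≤ S)
    (h : b % m = (S + 1) % m) :
    b / m + (S - b) / m ≤ X / m + (S - X) / m := by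
  have hd : ∀ a, a ≤ S → m * (a / m) + m * ((S - a) / m) + (a % m + (S - a) % m) = S := by
    intro a ha
    have h1 := Nat.div_add_mod a m
    have h2 := Nat.div_add_mod (S - a) m
    have h3 : a + (S - a) = S := by omega
    linarith
  have ht : ∀ a, a ≤ S → a % m + (S - a) % m = S % m ∨ a % m + (S - a) % m = S % m + m := by
    intro a ha
    have hmod : (a % m + (S - a) % m) % m = S % m := by
      have := (Nat.add_mod a (S - a) m).symm
      rwa [show a + (S - a) = S from by omega] at this
    have h1 : a % m < m := Nat.mod_lt _ hm
    have h2 : (S - a) % m < m := Nat.mod_lt _ hm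
    set t := a % m + (S - a) % m with htd
    have hq := Nat.div_add_mod t m
    have hq2 : t / m < 2 := Nat.div_lt_of_lt_mul (by omega)
    have h00 : t / m = 0 ∨ t / m = 1 := by
      rcases Nat.lt_or_ge (t / m) 1 with h' | h'
      · exact Or.inl (Nat.lt_one_iff.mp h')
      · exact Or.inr (le_antisymm (Nat.lt_succ_iff.mp hq2) h')
    rw [hmod] at hq
    rcases h00 with h0 | h0 <;> rw [h0] at hq <;> simp at hq <;> omega
  by_contra hcon
  push_neg at hcon
  have hmul : m * (X / m) + m * ((S - X) / m) + m ≤ m * (b / m) + m * ((S - b) / m) := by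
    have h1 : X / m + (S - X) / m + 1 ≤ b / m + (S - b) / m := hcon
    nlinarith
  have hdb := hd b hb
  have hdX := hd X hX
  have h1 : b % m + (S - b) % m + m ≤ X % m + (S - X) % m := by linarith
  have htb := ht b hb
  have htX := ht X hX
  have hx1 : X % m < m := Nat.mod_lt _ hm
  have hx2 : (S - X) % m < m := Nat.mod_lt _ hm
  have hb1 : b % m ≤ b % m + (S - b) % m := Nat.le_add_right _ _
  have hSm : S % m < m := Nat.mod_lt _ hm
  rcases Nat.lt_or_ge m 2 with hm2 | hm2
  · have : m = 1 := by omega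
    subst this
    simp [Nat.mod_one] at h1
  · rcases Nat.lt_or_ge (S % m + 1) m with hcase | hcase
    · -- (S+1) % m = S % m + 1
      have hs1 : (S + 1) % m = S % m + 1 := by
        rw [Nat.add_mod, Nat.mod_eq_of_lt (by omega : 1 < m), Nat.mod_eq_of_lt hcase]
      rw [hs1] at h
      -- b % m = S % m + 1, so tb = S % m + m
      have htb' : b % m + (S - b) % m = S % m + m := by
        rcases htb with h' | h' <;> omega
      rcases htX with h' | h' <;> omega
    · have hcase' : S % m + 1 = m := by omega
      rcases htb with h' | h' <;> rcases htX with h'' | h'' <;> omega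

private lemma count_Ioc (m a b : ℕ) (h : a ≤ b) :
    ((Finset.Ioc a b).filter (fun x => m ∣ x)).card = b / m - a / m := by
  have hu : Finset.Ioc 0 a ∪ Finset.Ioc a b = Finset.Ioc 0 b :=
    Finset.Ioc_union_Ioc_eq_Ioc (Nat.zero_le a) h
  have hdisj : Disjoint (Finset.Ioc 0 a) (Finset.Ioc a b) := by
    rw [Finset.disjoint_left]
    intro x hx1 hx2
    rw [Finset.mem_Ioc] at hx1 hx2
    omega
  have hcard : ((Finset.Ioc 0 b).filter (fun x => m ∣ x)).card
      = ((Finset.Ioc 0 a).filter (fun x => m ∣ x)).card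
        + ((Finset.Ioc a b).filter (fun x => m ∣ x)).card := by
    rw [← hu, Finset.filter_union, Finset.card_union_of_disjoint
      (Finset.disjoint_filter_filter hdisj)]
  have e1 : ((Finset.Ioc 0 b).filter (fun x => m ∣ x)).card = b / m := by
    simpa using Nat.Ioc_filter_dvd_card_eq_div b m
  have e2 : ((Finset.Ioc 0 a).filter (fun x => m ∣ x)).card = a / m := by
    simpa using Nat.Ioc_filter_dvd_card_eq_div a m
  omega

private lemma count_formula (K γ m X : ℕ) (hK : 0 < K) (hm : 0 < m) (hX : X ≤ γ) :
    (((Finset.Icc 1 X).val + (Finset.Icc K (K + γ - X - 1)).val).filter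
        (fun x => m ∣ x)).card
      = X / m + (((K - 1) + (γ - X)) / m - (K - 1) / m) := by
  rw [Multiset.filter_add, Multiset.card_add]
  have e1 : Finset.Icc 1 X = Finset.Ioc 0 X := by
    rw [← Finset.Icc_add_one_left_eq_Ioc, zero_add]
  have e2 : Finset.Icc K (K + γ - X - 1) = Finset.Ioc (K - 1) ((K - 1) + (γ - X)) := by
    ext x
    rw [Finset.mem_Icc, Finset.mem_Ioc]
    omega
  have c1 : (((Finset.Icc 1 X).val).filter (fun x => m ∣ x)).card
      = ((Finset.Icc 1 X).filter (fun x => m ∣ x)).card := rfl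
  have c2 : (((Finset.Icc K (K + γ - X - 1)).val).filter (fun x => m ∣ x)).card
      = ((Finset.Icc K (K + γ - X - 1)).filter (fun x => m ∣ x)).card := rfl
  rw [c1, c2, e1, e2, count_Ioc m 0 X (Nat.zero_le X),
    count_Ioc m (K - 1) ((K - 1) + (γ - X)) (Nat.le_add_right _ _)]
  simp

/-- the count of multiples of `m` in `{1,…,X} ∪ {K,…,K+γ−X−1}` is
minimized when `X ≡ γ + K (mod m)`. -/
theorem cm_gamma_min (K γ m β : ℕ) (hK : 0 < K) (hγ : 0 < γ) (hm : 0 < m)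
    (hβ : β ≤ γ) (hmod : (β : ℤ) ≡ (γ : ℤ) + K [ZMOD (m : ℤ)])
    (X : ℕ) (hX : X ≤ γ) :
    (((Finset.Icc 1 β).val + (Finset.Icc K (K + γ - β - 1)).val).filter
        (fun x => m ∣ x)).card ≤
      (((Finset.Icc 1 X).val + (Finset.Icc K (K + γ - X - 1)).val).filter
        (fun x => m ∣ x)).card := by
  set S := K - 1 + γ with hS
  have hβS : β ≤ S := by omega
  have hXS : X ≤ S := by omega
  have hmodn : β % m = (S + 1) % m := by
    have h1 : (β : ℤ) % m = ((γ : ℤ) + K) % m := hmod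
    have h3 : γ + K = S + 1 := by omega
    have h4 : ((β % m : ℕ) : ℤ) = (((S + 1) % m : ℕ) : ℤ) := by
      push_cast
      rw [h1]
      congr 1
      omega
    exact_mod_cast h4
  have key := key_div m S β X hm hβS hXS hmodn
  rw [count_formula K γ m β hK hm hβ, count_formula K γ m X hK hm hX]
  have hb' : (K - 1) + (γ - β) = S - β := by omega
  have hx' : (K - 1) + (γ - X) = S - X := by omega
  rw [hb', hx']
  have d1 : (K - 1) / m ≤ (S - β) / m := Nat.div_le_div_right (by omega)
  have d2 : (K - 1) / m ≤ (S - X) / m := Nat.div_le_div_right (by omega)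
  rw [← Nat.add_sub_assoc d1, ← Nat.add_sub_assoc d2]
  exact Nat.sub_le_sub_right key _
end

section
/- Let p be a prime, e > 1 an integer, K > 0 and γ ≥ e integers. For a non-zero integer x define ν_{e,p}(x) = 0 if e ∤ x and ν_{e,p}(x) = 1 + ν_p(x/e) otherwise. For 0 ≤ X ≤ γ let M_X = {1,…,X} ∪ {K, K+1, …, K+γ−X−1} (a multiset of γ positive integers) and for i ≥ 0 let N(X)_i = #{x ∈ M_X : ν_{e,p}(x) ≥ i}. Let s be maximal with γ ≥ e·p^s, let A be minimal with A·e·p^s ≥ K, and set β = γ − A·e·p^s + K. Then 0 ≤ β ≤ γ, and for all 0 ≤ X ≤ γ and all i ≥ 0, N(β)_i ≤ N(X)_i. -/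
/-- `ν_{e,p}` on natural numbers: `0` if `e ∤ x`, else `1 + ν_p(x/e)`. -/
def nuepNat (e p x : ℕ) : ℕ :=
  if e ∣ x then 1 + padicValNat p (x / e) else 0

lemma nuep_ge_iff (e p x j : ℕ) (hp : p.Prime) (he : 1 < e) (hx : 0 < x) :
    (j + 1 ≤ nuepNat e p x) ↔ e * p ^ j ∣ x := by
  unfold nuepNat
  by_cases hd : e ∣ x
  · haveI : Fact p.Prime := ⟨hp⟩
    have hxe : x / e ≠ 0 := by
      have h1 : e ≤ x := Nat.le_of_dvd hx hd
      have h2 := Nat.div_pos h1 (by omega)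
      omega
    rw [if_pos hd, ← Nat.dvd_div_iff_mul_dvd hd, padicValNat_dvd_iff_le hxe]
    omega
  · rw [if_neg hd]
    constructor
    · omega
    · intro h
      exact absurd (dvd_trans (Dvd.intro (p ^ j) rfl) h) hd

lemma count_Ioc_dvd (m a b : ℕ) :
    ((Finset.Ioc a b).filter (fun x => m ∣ x)).card = b / m - a / m := by
  rcases le_or_gt a b with hab | hab
  · have h : Finset.Ioc 0 a ∪ Finset.Ioc a b = Finset.Ioc 0 b :=
      Finset.Ioc_union_Ioc_eq_Ioc (Nat.zero_le a) hab
    have hdisj : Disjoint (Finset.Ioc 0 a) (Finset.Ioc a b) := by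
      rw [Finset.disjoint_left]
      intro x h1 h2
      simp only [Finset.mem_Ioc] at h1 h2
      omega
    have hb := Nat.Ioc_filter_dvd_card_eq_div b m
    have ha := Nat.Ioc_filter_dvd_card_eq_div a m
    rw [← h, Finset.filter_union,
      Finset.card_union_of_disjoint (Finset.disjoint_filter_filter hdisj), ha] at hb
    have hmono : a / m ≤ b / m := Nat.div_le_div_right hab
    omega
  · rw [Finset.Ioc_eq_empty (by omega)]
    have hmono : b / m ≤ a / m := Nat.div_le_div_right hab.le
    simp only [Finset.filter_empty, Finset.card_empty]
    omega

lemma count_Icc_dvd (m a b : ℕ) (ha : 1 ≤ a) :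
    ((Finset.Icc a b).filter (fun x => m ∣ x)).card = b / m - (a - 1) / m := by
  rcases a with _ | a'
  · omega
  · rw [Finset.Icc_add_one_left_eq_Ioc, count_Ioc_dvd]
    simp

/-- Key arithmetic inequality when `m ∣ q`. -/
lemma key_dvd (m C β X q : ℕ) (hm : 0 < m) (hβ : β ≤ C) (hX : X ≤ C)
    (hq : β + q = C + 1) (hd : m ∣ q) :
    β / m + (C - β) / m ≤ X / m + (C - X) / m := by
  obtain ⟨k, hk⟩ := hd
  have hk1 : 1 ≤ k := by
    rcases Nat.eq_zero_or_pos k with h | h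
    · subst h; simp at hk; omega
    · exact h
  have hCβ : C - β = q - 1 := by omega
  -- (q - 1) % m = m - 1
  have hqm : (q - 1) % m = m - 1 := by
    have h1 : q - 1 = (m - 1) + m * (k - 1) := by
      rcases k with _ | k'
      · omega
      · simp only [Nat.mul_succ] at hk
        simp only [Nat.succ_sub_one]
        omega
    rw [h1, Nat.add_mul_mod_self_left, Nat.mod_eq_of_lt (by omega)]
  have hdivX := Nat.add_div (a := X) (b := C - X) hm
  have hdivβ := Nat.add_div (a := β) (b := C - β) hm
  rw [show X + (C - X) = C by omega] at hdivX
  rw [show β + (C - β) = C by omega] at hdivβ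
  by_cases hiX : m ≤ X % m + (C - X) % m
  · rw [if_pos hiX] at hdivX
    have hβm : β % m ≠ 0 := by
      intro h0
      have hdβ : m ∣ β := Nat.dvd_of_mod_eq_zero h0
      have hdC : m ∣ C + 1 := by
        have h2 : m ∣ β + q := Dvd.dvd.add hdβ ⟨k, hk⟩
        rwa [hq] at h2
      obtain ⟨c, hc⟩ := hdC
      have h2 := Nat.div_add_mod X m
      have h3 := Nat.div_add_mod (C - X) m
      have h4 : X % m < m := Nat.mod_lt _ hm
      have h5 : (C - X) % m < m := Nat.mod_lt _ hm
      have hS : m ∣ m * (X / m) + m * ((C - X) / m) :=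
        Dvd.dvd.add (Dvd.intro _ rfl) (Dvd.intro _ rfl)
      have h7 : m ∣ X % m + (C - X) % m + 1 := by
        have heq : X % m + (C - X) % m + 1
            = m * c - (m * (X / m) + m * ((C - X) / m)) := by omega
        rw [heq]
        exact Nat.dvd_sub (Dvd.intro c rfl) hS
      obtain ⟨k2, hk2⟩ := h7
      rcases Nat.lt_or_ge k2 2 with h8 | h8
      · interval_cases k2 <;> omega
      · have h9 : m * 2 ≤ m * k2 := Nat.mul_le_mul_left m h8
        omega
    have hiβ : m ≤ β % m + (C - β) % m := by
      rw [hCβ, hqm]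
      have h2 : β % m < m := Nat.mod_lt _ hm
      omega
    rw [if_pos hiβ] at hdivβ
    omega
  · rw [if_neg hiX] at hdivX
    by_cases hiβ : m ≤ β % m + (C - β) % m
    · rw [if_pos hiβ] at hdivβ; omega
    · rw [if_neg hiβ] at hdivβ; omega

/-- Lemma 3.14 ('CMgamma2') of the paper. -/
theorem cm_gamma_two (p e K γ s A : ℕ) (hp : p.Prime) (he : 1 < e)
    (hK : 0 < K) (hγ : e ≤ γ)
    (hs1 : e * p ^ s ≤ γ) (hs2 : γ < e * p ^ (s + 1))
    (hA1 : K ≤ A * (e * p ^ s)) (hA2 : ∀ B, K ≤ B * (e * p ^ s) → A ≤ B) :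
    ∃ β : ℕ, (β : ℤ) = (γ : ℤ) - A * (e * p ^ s) + K ∧ β ≤ γ ∧
      ∀ X ≤ γ, ∀ i : ℕ,
        (((Finset.Icc 1 β).val + (Finset.Icc K (K + γ - β - 1)).val).filter
            (fun x => i ≤ nuepNat e p x)).card ≤
          (((Finset.Icc 1 X).val + (Finset.Icc K (K + γ - X - 1)).val).filter
            (fun x => i ≤ nuepNat e p x)).card := by
  have hp1 : 1 < p := hp.one_lt
  have heps : 0 < e * p ^ s := by positivity
  have hA0 : 1 ≤ A := by
    by_contra h
    push_neg at h
    interval_cases A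
    simp at hA1
    omega
  have hA3 : (A - 1) * (e * p ^ s) < K := by
    by_contra h
    push_neg at h
    have := hA2 (A - 1) h
    omega
  have hAK : A * (e * p ^ s) < K + e * p ^ s := by
    have heq : A * (e * p ^ s) = (A - 1) * (e * p ^ s) + e * p ^ s := by
      rcases A with _ | A'
      · omega
      · simp [Nat.succ_sub_one, Nat.succ_mul]
    omega
  have hqγK' : A * (e * p ^ s) ≤ γ + K := by omega
  have hcast : ((γ + K - A * (e * p ^ s) : ℕ) : ℤ)
      = (γ : ℤ) - A * (e * p ^ s) + K := by
    rw [Nat.cast_sub hqγK']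
    push_cast
    ring
  set q := A * (e * p ^ s) with hqdef
  have hqγK : q ≤ γ + K := by omega
  refine ⟨γ + K - q, hcast, by omega, ?_⟩
  intro X hX i
  set β := γ + K - q with hβdef
  have hβγ : β ≤ γ := by omega
  have hconv : ∀ (a b c d : ℕ) (pr : ℕ → Prop) [DecidablePred pr],
      (((Finset.Icc a b).val + (Finset.Icc c d).val).filter pr).card
        = ((Finset.Icc a b).filter pr).card + ((Finset.Icc c d).filter pr).card := by
    intro a b c d pr _
    rw [Multiset.filter_add, Multiset.card_add, ← Finset.filter_val, ← Finset.filter_val]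
    rfl
  rcases i with _ | j
  · -- i = 0 : both sides have cardinality γ
    have htriv : ∀ (s : Finset ℕ), s.filter (fun x => 0 ≤ nuepNat e p x) = s :=
      fun s => Finset.filter_true_of_mem (fun x _ => Nat.zero_le _)
    rw [hconv, hconv, htriv, htriv, htriv, htriv,
      Nat.card_Icc, Nat.card_Icc, Nat.card_Icc, Nat.card_Icc]
    omega
  · -- i = j + 1 : counting multiples of m = e * p ^ j
    set m := e * p ^ j with hmdef
    have hm : 0 < m := by positivity
    have hfc : ∀ a b : ℕ, 1 ≤ a →
        (Finset.Icc a b).filter (fun x => j + 1 ≤ nuepNat e p x)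
          = (Finset.Icc a b).filter (fun x => m ∣ x) := by
      intro a b ha
      apply Finset.filter_congr
      intro x hx
      simp only [Finset.mem_Icc] at hx
      simp only [nuep_ge_iff e p x j hp he (by omega), hmdef]
    rw [hconv, hconv, hfc 1 β le_rfl, hfc 1 X le_rfl, hfc K _ hK, hfc K _ hK,
      count_Icc_dvd m 1 β le_rfl, count_Icc_dvd m 1 X le_rfl,
      count_Icc_dvd m K _ hK, count_Icc_dvd m K _ hK]
    simp only [Nat.sub_self, Nat.zero_div, Nat.sub_zero]
    set C := K + γ - 1 with hCdef
    have hCβ : K + γ - β - 1 = C - β := by omega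
    have hCX : K + γ - X - 1 = C - X := by omega
    rw [hCβ, hCX]
    have hβC : β ≤ C := by omega
    have hXC : X ≤ C := by omega
    have hd1 : (K - 1) / m ≤ (C - β) / m := Nat.div_le_div_right (by omega)
    have hd2 : (K - 1) / m ≤ (C - X) / m := Nat.div_le_div_right (by omega)
    have hqsum : β + q = C + 1 := by omega
    have key : β / m + (C - β) / m ≤ X / m + (C - X) / m := by
      rcases le_or_gt j s with hjs | hjs
      · -- m divides e * p ^ s, hence divides q
        have hdvd : m ∣ q := by
          have h1 : m ∣ e * p ^ s := by
            refine ⟨p ^ (s - j), ?_⟩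
            rw [hmdef, mul_assoc, ← pow_add]
            congr 2
            omega
          exact Dvd.dvd.mul_left h1 A
        exact key_dvd m C β X q hm hβC hXC hqsum hdvd
      · -- m > γ : use minimality of A
        have hmγ : γ < m := by
          have h1 : e * p ^ (s + 1) ≤ e * p ^ j :=
            Nat.mul_le_mul_left e (Nat.pow_le_pow_right (by omega) (by omega))
          omega
        have hβ0 : β / m = 0 := Nat.div_eq_of_lt (by omega)
        have hX0 : X / m = 0 := Nat.div_eq_of_lt (by omega)
        have hCβq : C - β = q - 1 := by omega
        have hcrit : (q - 1) / m ≤ (K - 1) / m := by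
          by_contra h
          push_neg at h
          have hb1 : ((K - 1) / m + 1) * m ≤ q - 1 :=
            (Nat.le_div_iff_mul_le hm).1 h
          have hdm := Nat.div_add_mod (K - 1) m
          have hmlt : (K - 1) % m < m := Nat.mod_lt _ hm
          have hb2 : K ≤ ((K - 1) / m + 1) * m := by
            have : ((K - 1) / m + 1) * m = m * ((K - 1) / m) + m := by ring
            omega
          -- ((K-1)/m + 1) * m is a multiple of e * p ^ s that is ≥ K and < q
          have hmul : ((K - 1) / m + 1) * m
              = (((K - 1) / m + 1) * p ^ (j - s)) * (e * p ^ s) := by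
            have hsplit : m = e * p ^ s * p ^ (j - s) := by
              rw [hmdef, mul_assoc, ← pow_add]
              congr 2
              omega
            rw [hsplit]
            ring
          have hB := hA2 (((K - 1) / m + 1) * p ^ (j - s)) (by rw [← hmul]; exact hb2)
          have hq2 : q ≤ ((K - 1) / m + 1) * m := by
            rw [hmul, hqdef]
            exact Nat.mul_le_mul_right _ hB
          omega
        calc β / m + (C - β) / m = (q - 1) / m := by rw [hβ0, hCβq]; omega
          _ ≤ (K - 1) / m := hcrit
          _ ≤ (C - X) / m := hd2
          _ ≤ X / m + (C - X) / m := by omega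
    revert key hd1 hd2
    generalize β / m = a1
    generalize (C - β) / m = a2
    generalize X / m = a3
    generalize (C - X) / m = a4
    generalize (K - 1) / m = a5
    intro key hd1 hd2
    omega
end
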